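/- arXiv:1210.4809 — 3 statements merged into one kernel-verified Lean document; each statement's English description precedes it below -/
import Mathlib

section
/- If A is a worm all of whose modalities are strictly greater than α (A ∈ 𝕎_{α+1}), then for any worm B, GLP_Λ proves (A ∧ ⟨α⟩B) ↔ A⟨α⟩B, where A⟨α⟩B denotes the concatenation of A, the modality ⟨α⟩, and B. -/
inductive Formula (L : Type) : Type where
  | bot : Formula L
  | var : Nat → Formula L
  | imp : Formula L → Formula L → Formula L
  | box : L → Formula L → Formula L

namespace Formula

variable {L : Type}

def neg (φ : Formula L) : Formula L := imp φ bot
def top : Formula L := neg bot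
def and (φ ψ : Formula L) : Formula L := neg (imp φ ψ.neg)
def or (φ ψ : Formula L) : Formula L := imp φ.neg ψ
def iff (φ ψ : Formula L) : Formula L := (imp φ ψ).and (imp ψ φ)
def dia (α : L) (φ : Formula L) : Formula L := neg (box α φ.neg)

end Formula

open Formula

/-- Provability in the polymodal provability logic `GLP_Λ` over a linear order. -/
inductive GLP {L : Type} [LinearOrder L] : Formula L → Prop where
  | k1 : ∀ φ ψ : Formula L, GLP (φ.imp (ψ.imp φ))
  | k2 : ∀ φ ψ χ : Formula L, GLP ((φ.imp (ψ.imp χ)).imp ((φ.imp ψ).imp (φ.imp χ)))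
  | k3 : ∀ φ ψ : Formula L, GLP ((φ.neg.imp ψ.neg).imp (ψ.imp φ))
  | dist : ∀ (α : L) (φ ψ : Formula L), GLP ((Formula.box α (φ.imp ψ)).imp ((Formula.box α φ).imp (Formula.box α ψ)))
  | lob : ∀ (α : L) (φ : Formula L), GLP ((Formula.box α ((Formula.box α φ).imp φ)).imp (Formula.box α φ))
  | trans : ∀ (α β : L) (φ : Formula L), α ≤ β → GLP ((Formula.box α φ).imp (Formula.box β (Formula.box α φ)))
  | negintro : ∀ (α β : L) (φ : Formula L), α < β → GLP ((dia α φ).imp (Formula.box β (dia α φ)))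
  | mono : ∀ (α β : L) (φ : Formula L), α ≤ β → GLP ((Formula.box α φ).imp (Formula.box β φ))
  | mp : ∀ φ ψ : Formula L, GLP (φ.imp ψ) → GLP φ → GLP ψ
  | nec : ∀ (α : L) (φ : Formula L), GLP φ → GLP (Formula.box α φ)

/-- The worm (iterated consistency statement) associated to a list of modalities. -/
def worm {L : Type} : List L → Formula L
  | [] => Formula.top
  | α :: w => Formula.dia α (worm w)

/-- `Lt α A B` iff `GLP ⊢ B → ⟨α⟩A`. -/
def Lt {L : Type} [LinearOrder L] (α : L) (A B : List L) : Prop :=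
  GLP ((worm B).imp (Formula.dia α (worm A)))

def Le {L : Type} [LinearOrder L] (α : L) (A B : List L) : Prop :=
  Lt α A B ∨ A = B

section Aux

variable {L : Type} [LinearOrder L]

/-- Derivability from a set of hypotheses, used to obtain a deduction theorem. -/
inductive Der (Γ : Set (Formula L)) : Formula L → Prop
  | hyp {φ} : φ ∈ Γ → Der Γ φ
  | thm {φ} : GLP φ → Der Γ φ
  | mp {φ ψ} : Der Γ (φ.imp ψ) → Der Γ φ → Der Γ ψ

lemma glp_imp_refl (φ : Formula L) : GLP (φ.imp φ) :=
  GLP.mp _ _ (GLP.mp _ _ (GLP.k2 φ (φ.imp φ) φ) (GLP.k1 φ (φ.imp φ))) (GLP.k1 φ φ)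

lemma Der.ded {Γ : Set (Formula L)} {φ ψ} (h : Der (insert φ Γ) ψ) : Der Γ (φ.imp ψ) := by
  induction h with
  | hyp h =>
    rcases h with rfl | h
    · exact .thm (glp_imp_refl _)
    · exact .mp (.thm (GLP.k1 _ _)) (.hyp h)
  | thm h => exact .mp (.thm (GLP.k1 _ _)) (.thm h)
  | mp _ _ ih1 ih2 => exact .mp (.mp (.thm (GLP.k2 _ _ _)) ih1) ih2

lemma Der.glp {φ : Formula L} (h : Der (∅ : Set (Formula L)) φ) : GLP φ := by
  induction h with
  | hyp h => exact absurd h (Set.notMem_empty _)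
  | thm h => exact h
  | mp _ _ ih1 ih2 => exact GLP.mp _ _ ih1 ih2

lemma glp_imp_trans {φ ψ χ : Formula L} (h1 : GLP (φ.imp ψ)) (h2 : GLP (ψ.imp χ)) :
    GLP (φ.imp χ) :=
  Der.glp <| Der.ded <| .mp (.thm h2) (.mp (.thm h1) (.hyp (by simp)))

lemma glp_dni (φ : Formula L) : GLP (φ.imp φ.neg.neg) :=
  Der.glp <| Der.ded <| Der.ded <|
    .mp (.hyp (Set.mem_insert _ _)) (.hyp (by simp))

lemma glp_dne (φ : Formula L) : GLP (φ.neg.neg.imp φ) :=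
  GLP.mp _ _ (GLP.k3 φ φ.neg.neg) (glp_dni φ.neg)

lemma glp_efq (φ : Formula L) : GLP (Formula.bot.imp φ) :=
  glp_imp_trans (GLP.k1 Formula.bot φ.neg) (glp_dne φ)

lemma glp_top : GLP (Formula.top : Formula L) := glp_imp_refl Formula.bot

lemma glp_and_intro (φ ψ : Formula L) : GLP (φ.imp (ψ.imp (φ.and ψ))) :=
  Der.glp <| Der.ded <| Der.ded <| Der.ded <|
    .mp (.mp (.hyp (Set.mem_insert _ _)) (.hyp (by simp))) (.hyp (by simp))

lemma glp_and_elim_l (φ ψ : Formula L) : GLP ((φ.and ψ).imp φ) := by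
  refine Der.glp <| Der.ded <| Der.mp (.thm (glp_dne φ)) ?_
  refine Der.ded ?_
  -- hyps : φ.neg, φ.and ψ ; goal : bot
  have hand : Der (insert φ.neg (insert (φ.and ψ) (∅ : Set (Formula L)))) (φ.and ψ) :=
    .hyp (by simp)
  have himp : Der (insert φ.neg (insert (φ.and ψ) (∅ : Set (Formula L)))) (φ.imp ψ.neg) :=
    Der.ded <| .mp (.thm (glp_efq ψ.neg))
      (.mp (.hyp (Set.mem_insert_of_mem _ (Set.mem_insert _ _))) (.hyp (Set.mem_insert _ _)))
  exact Der.mp hand himp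

lemma glp_and_elim_r (φ ψ : Formula L) : GLP ((φ.and ψ).imp ψ) := by
  refine Der.glp <| Der.ded <| Der.mp (.thm (glp_dne ψ)) ?_
  refine Der.ded ?_
  have hand : Der (insert ψ.neg (insert (φ.and ψ) (∅ : Set (Formula L)))) (φ.and ψ) :=
    .hyp (by simp)
  have himp : Der (insert ψ.neg (insert (φ.and ψ) (∅ : Set (Formula L)))) (φ.imp ψ.neg) :=
    Der.mp (.thm (GLP.k1 ψ.neg φ)) (.hyp (Set.mem_insert _ _))
  exact Der.mp hand himp

lemma glp_imp_and {χ φ ψ : Formula L} (h1 : GLP (χ.imp φ)) (h2 : GLP (χ.imp ψ)) :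
    GLP (χ.imp (φ.and ψ)) :=
  Der.glp <| Der.ded <|
    .mp (.mp (.thm (glp_and_intro φ ψ)) (.mp (.thm h1) (.hyp (by simp))))
      (.mp (.thm h2) (.hyp (by simp)))

lemma glp_iff_intro {φ ψ : Formula L} (h1 : GLP (φ.imp ψ)) (h2 : GLP (ψ.imp φ)) :
    GLP (φ.iff ψ) :=
  GLP.mp _ _ (GLP.mp _ _ (glp_and_intro _ _) h1) h2

lemma glp_iff_mp {φ ψ : Formula L} (h : GLP (φ.iff ψ)) : GLP (φ.imp ψ) :=
  GLP.mp _ _ (glp_and_elim_l _ _) h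

lemma glp_iff_mpr {φ ψ : Formula L} (h : GLP (φ.iff ψ)) : GLP (ψ.imp φ) :=
  GLP.mp _ _ (glp_and_elim_r _ _) h

lemma glp_contrapose {φ ψ : Formula L} (h : GLP (φ.imp ψ)) : GLP (ψ.neg.imp φ.neg) :=
  Der.glp <| Der.ded <| Der.ded <|
    .mp (.hyp (Set.mem_insert_of_mem _ (Set.mem_insert _ _)))
      (.mp (.thm h) (.hyp (Set.mem_insert _ _)))

lemma glp_box_mono {φ ψ : Formula L} (γ : L) (h : GLP (φ.imp ψ)) :
    GLP ((Formula.box γ φ).imp (Formula.box γ ψ)) :=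
  GLP.mp _ _ (GLP.dist γ φ ψ) (GLP.nec γ _ h)

lemma glp_dia_mono {φ ψ : Formula L} (γ : L) (h : GLP (φ.imp ψ)) :
    GLP ((Formula.dia γ φ).imp (Formula.dia γ ψ)) :=
  glp_contrapose (glp_box_mono γ (glp_contrapose h))

lemma glp_dia_dia {α β : L} (φ : Formula L) (h : α ≤ β) :
    GLP ((Formula.dia β (Formula.dia α φ)).imp (Formula.dia α φ)) := by
  have t1 : GLP ((Formula.box α φ.neg).imp (Formula.box β (Formula.box α φ.neg))) :=
    GLP.trans α β φ.neg h
  have t2 : GLP ((Formula.box β (Formula.box α φ.neg)).imp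
      (Formula.box β (Formula.dia α φ).neg)) :=
    glp_box_mono β (glp_dni (Formula.box α φ.neg))
  exact glp_contrapose (glp_imp_trans t1 t2)

lemma glp_dia_box_and (γ : L) (φ ψ : Formula L) :
    GLP (((Formula.dia γ φ).and (Formula.box γ ψ)).imp (Formula.dia γ (φ.and ψ))) := by
  have s1 : GLP (ψ.imp ((φ.and ψ).neg.imp φ.neg)) :=
    Der.glp <| Der.ded <| Der.ded <| Der.ded <|
      .mp (.hyp (Set.mem_insert_of_mem _ (Set.mem_insert _ _)))
        (.mp (.mp (.thm (glp_and_intro φ ψ)) (.hyp (Set.mem_insert _ _)))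
          (.hyp (by simp)))
  have c : GLP ((Formula.box γ ψ).imp
      ((Formula.box γ (φ.and ψ).neg).imp (Formula.box γ φ.neg))) :=
    glp_imp_trans (glp_box_mono γ s1) (GLP.dist γ (φ.and ψ).neg φ.neg)
  refine Der.glp <| Der.ded <| Der.ded ?_
  -- hyps : box γ (φ∧ψ).neg , (dia γ φ).and (box γ ψ) ; goal : bot
  have hcon : Der (insert (Formula.box γ (φ.and ψ).neg)
      (insert ((Formula.dia γ φ).and (Formula.box γ ψ)) (∅ : Set (Formula L))))
      ((Formula.dia γ φ).and (Formula.box γ ψ)) := .hyp (by simp)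
  have hbox := Der.mp (.thm (glp_and_elim_r (Formula.dia γ φ) (Formula.box γ ψ))) hcon
  have hdia := Der.mp (.thm (glp_and_elim_l (Formula.dia γ φ) (Formula.box γ ψ))) hcon
  exact Der.mp hdia (.mp (.mp (.thm c) hbox) (.hyp (Set.mem_insert _ _)))

end Aux

/-- If all modalities of the worm `A` are `> α`, then
`GLP ⊢ (A ∧ ⟨α⟩B) ↔ A⟨α⟩B`. -/
theorem and_dia_eq_concat {L : Type} [LinearOrder L] (α : L) (A B : List L)
    (hA : ∀ β ∈ A, α < β) :
    GLP (((worm A).and (Formula.dia α (worm B))).iff (worm (A ++ α :: B))) := by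
  induction A with
  | nil =>
    simp only [List.nil_append, worm]
    set D := Formula.dia α (worm B)
    refine glp_iff_intro (glp_and_elim_r _ _) (glp_imp_and ?_ (glp_imp_refl D))
    exact GLP.mp _ _ (GLP.k1 Formula.top D) glp_top
  | cons β A' ih =>
    have hβ : α < β := hA β (List.mem_cons_self)
    have ih' := ih (fun γ hγ => hA γ (List.mem_cons_of_mem β hγ))
    simp only [List.cons_append, worm] at *
    set W' := worm A'
    set D := Formula.dia α (worm B)
    set C := worm (A' ++ α :: B)
    have fwd : GLP (((Formula.dia β W').and D).imp (Formula.dia β C)) := by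
      have f1 : GLP (D.imp (Formula.box β D)) := GLP.negintro α β (worm B) hβ
      refine Der.glp <| Der.ded ?_
      have hc : Der (insert ((Formula.dia β W').and D) (∅ : Set (Formula L)))
          ((Formula.dia β W').and D) := .hyp (Set.mem_insert _ _)
      have d1 := Der.mp (.thm (glp_and_elim_l (Formula.dia β W') D)) hc
      have d2 := Der.mp (.thm f1) (Der.mp (.thm (glp_and_elim_r (Formula.dia β W') D)) hc)
      have d3 := Der.mp (Der.mp (.thm (glp_and_intro (Formula.dia β W') (Formula.box β D))) d1) d2
      have d4 := Der.mp (.thm (glp_dia_box_and β W' D)) d3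
      exact Der.mp (.thm (glp_dia_mono β (glp_iff_mp ih'))) d4
    have bwd : GLP ((Formula.dia β C).imp ((Formula.dia β W').and D)) := by
      have b1 : GLP ((Formula.dia β C).imp (Formula.dia β (W'.and D))) :=
        glp_dia_mono β (glp_iff_mpr ih')
      have b2 : GLP ((Formula.dia β (W'.and D)).imp (Formula.dia β W')) :=
        glp_dia_mono β (glp_and_elim_l W' D)
      have b3 : GLP ((Formula.dia β (W'.and D)).imp (Formula.dia β D)) :=
        glp_dia_mono β (glp_and_elim_r W' D)
      have b4 : GLP ((Formula.dia β D).imp D) := glp_dia_dia (worm B) hβ.le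
      exact glp_imp_and (glp_imp_trans b1 b2) (glp_imp_trans (glp_imp_trans b1 b3) b4)
    exact glp_iff_intro fwd bwd
end

section
/- For any worms A and B in worm normal form with all modalities ≥ α, exactly one of the following trichotomy cases can fail to be excluded syntactically: either A = B, or A <_α B, or B <_α A (i.e., the relation <_α is total on worm normal forms in 𝕎_α modulo equality). -/
open Formula

/-- Join a list of blocks, separating consecutive blocks by the modality `α`. -/
def joinSep {L : Type} (α : L) : List (List L) → List L
  | [] => []
  | [p] => p
  | p :: ps => p ++ α :: joinSep α ps

/-- Worm normal form. -/
inductive WNF {L : Type} [LinearOrder L] [SuccOrder L] : List L → Prop where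
  | nil : WNF []
  | node (α : L) (parts : List (List L))
      (hlen : 2 ≤ parts.length)
      (hmods : ∀ p ∈ parts, ∀ β ∈ p, α < β)
      (hwnf : ∀ p ∈ parts, WNF p)
      (hord : parts.Chain' (Le (Order.succ α)))
      : WNF (joinSep α parts)

-- ===================== propositional toolkit =====================
section PropLayer
variable {L : Type} [LinearOrder L]

namespace GLP

theorem mp' {φ ψ : Formula L} (h1 : GLP (φ.imp ψ)) (h2 : GLP φ) : GLP ψ := GLP.mp _ _ h1 h2

theorem imp_id (φ : Formula L) : GLP (φ.imp φ) := by
  have h1 := GLP.k2 φ (φ.imp φ) φ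
  have h2 := GLP.k1 φ (φ.imp φ)
  have h3 := GLP.k1 φ φ
  exact mp' (mp' h1 h2) h3

theorem wk {φ : Formula L} (ψ : Formula L) (h : GLP φ) : GLP (ψ.imp φ) :=
  mp' (GLP.k1 _ _) h

theorem comp {φ ψ χ : Formula L} (h1 : GLP (φ.imp ψ)) (h2 : GLP (ψ.imp χ)) :
    GLP (φ.imp χ) :=
  mp' (mp' (GLP.k2 φ ψ χ) (wk _ h2)) h1

theorem ctx_mp {χ φ ψ : Formula L} (h1 : GLP (χ.imp (φ.imp ψ))) (h2 : GLP (χ.imp φ)) :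
    GLP (χ.imp ψ) :=
  mp' (mp' (GLP.k2 χ φ ψ) h1) h2

theorem flipH {φ ψ χ : Formula L} (h : GLP (φ.imp (ψ.imp χ))) : GLP (ψ.imp (φ.imp χ)) :=
  comp (GLP.k1 ψ φ) (mp' (GLP.k2 φ ψ χ) h)

/-- B combinator: (ψ→χ) → (φ→ψ) → (φ→χ) -/
theorem bO (φ ψ χ : Formula L) : GLP ((ψ.imp χ).imp ((φ.imp ψ).imp (φ.imp χ))) :=
  comp (GLP.k1 _ φ) (GLP.k2 φ ψ χ)

/-- B' combinator: (φ→ψ) → (ψ→χ) → (φ→χ) -/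
theorem bO' (φ ψ χ : Formula L) : GLP ((φ.imp ψ).imp ((ψ.imp χ).imp (φ.imp χ))) :=
  flipH (bO φ ψ χ)

/-- in-context composition: χ → (X→Y) and ⊢B→X gives χ → (B→Y)  -/
theorem ctx_precomp {χ X Y B : Formula L} (h : GLP (χ.imp (X.imp Y))) (g : GLP (B.imp X)) :
    GLP (χ.imp (B.imp Y)) :=
  ctx_mp (comp h (bO B X Y)) (wk _ g)

/-- in-context postcomposition: χ → (B→X) and ⊢X→Y gives χ → (B→Y) -/
theorem ctx_postcomp {χ X Y B : Formula L} (h : GLP (χ.imp (B.imp X))) (g : GLP (X.imp Y)) :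
    GLP (χ.imp (B.imp Y)) :=
  ctx_mp (comp h (bO' B X Y)) (wk _ g)

/-- C combinator (object-level flip) -/
theorem flipO (φ ψ χ : Formula L) : GLP ((φ.imp (ψ.imp χ)).imp (ψ.imp (φ.imp χ))) := by
  -- context Γ = φ→(ψ→χ)
  have h1 : GLP ((φ.imp (ψ.imp χ)).imp ((φ.imp ψ).imp (φ.imp χ))) := GLP.k2 φ ψ χ
  have h2 : GLP ((φ.imp (ψ.imp χ)).imp (ψ.imp (φ.imp χ))) :=
    ctx_precomp h1 (GLP.k1 ψ φ)
  exact h2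

theorem dni (φ : Formula L) : GLP (φ.imp φ.neg.neg) :=
  flipH (imp_id φ.neg)

theorem efq (φ : Formula L) : GLP (Formula.bot.imp φ) := by
  have h : GLP ((φ.neg.imp (Formula.bot.neg)).imp (Formula.bot.imp φ)) := GLP.k3 φ Formula.bot
  exact mp' h (wk _ (imp_id Formula.bot))

theorem top_intro : GLP (Formula.top : Formula L) := imp_id Formula.bot

theorem imp_top (φ : Formula L) : GLP (φ.imp Formula.top) := wk _ top_intro

theorem dne (φ : Formula L) : GLP (φ.neg.neg.imp φ) := by
  have h := GLP.k3 φ φ.neg.neg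
  exact mp' h (dni φ.neg)

/-- object contraposition -/
theorem cposO (φ ψ : Formula L) : GLP ((φ.imp ψ).imp (ψ.neg.imp φ.neg)) := bO' φ ψ Formula.bot

theorem cpos {φ ψ : Formula L} (h : GLP (φ.imp ψ)) : GLP (ψ.neg.imp φ.neg) :=
  mp' (cposO φ ψ) h

theorem cpos' {φ ψ : Formula L} (h : GLP (φ.neg.imp ψ.neg)) : GLP (ψ.imp φ) :=
  mp' (GLP.k3 _ _) h

theorem and_intro (φ ψ : Formula L) : GLP (φ.imp (ψ.imp (φ.and ψ))) := by
  -- and φ ψ = (φ → ¬ψ) → ⊥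
  have h1 : GLP ((φ.imp ψ.neg).imp (φ.imp (ψ.imp Formula.bot))) := imp_id _
  have h2 : GLP (φ.imp ((φ.imp ψ.neg).imp (ψ.imp Formula.bot))) := flipH h1
  -- now swap inner two: want φ → (ψ → ((φ→¬ψ)→⊥))
  exact comp h2 (flipO (φ.imp ψ.neg) ψ Formula.bot)

theorem and_elim1 (φ ψ : Formula L) : GLP ((φ.and ψ).imp φ) := by
  have h1 : GLP (φ.neg.imp (φ.imp ψ.neg)) :=
    comp (imp_id φ.neg) (ctx_postcomp (imp_id (φ.imp Formula.bot)) (efq ψ.neg))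
  exact cpos' (comp h1 (dni (φ.imp ψ.neg)))

theorem and_elim2 (φ ψ : Formula L) : GLP ((φ.and ψ).imp ψ) := by
  have h1 : GLP (ψ.neg.imp (φ.imp ψ.neg)) := GLP.k1 _ _
  exact cpos' (comp h1 (dni (φ.imp ψ.neg)))

theorem and_intro_ctx {χ φ ψ : Formula L} (h1 : GLP (χ.imp φ)) (h2 : GLP (χ.imp ψ)) :
    GLP (χ.imp (φ.and ψ)) :=
  ctx_mp (ctx_mp (wk _ (and_intro φ ψ)) h1) h2

end GLP
end PropLayer

-- ===================== modal toolkit =====================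
section ModalLayer
variable {L : Type} [LinearOrder L]
namespace GLP

theorem box_cong {φ ψ : Formula L} (β : L) (h : GLP (φ.imp ψ)) :
    GLP ((Formula.box β φ).imp (Formula.box β ψ)) :=
  mp' (GLP.dist β φ ψ) (GLP.nec β _ h)

theorem dia_cong {φ ψ : Formula L} (β : L) (h : GLP (φ.imp ψ)) :
    GLP ((dia β φ).imp (dia β ψ)) :=
  cpos (box_cong β (cpos h))

theorem dia_mono {φ : Formula L} {α β : L} (h : α ≤ β) :
    GLP ((dia β φ).imp (dia α φ)) :=
  cpos (GLP.mono α β φ.neg h)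

theorem dia_collapse (γ : L) (φ : Formula L) :
    GLP ((dia γ (dia γ φ)).imp (dia γ φ)) := by
  have h1 : GLP ((Formula.box γ φ.neg).imp (Formula.box γ (Formula.box γ φ.neg))) :=
    GLP.trans γ γ φ.neg le_rfl
  have h2 : GLP ((Formula.box γ (Formula.box γ φ.neg)).imp (Formula.box γ (dia γ φ).neg)) :=
    box_cong γ (dni (Formula.box γ φ.neg))
  exact cpos (comp h1 h2)

/-- from ⊢A→⟨γ⟩B and ⊢B→⟨γ⟩C conclude ⊢A→⟨γ⟩C -/
theorem dia_trans {A B C : Formula L} {γ : L} (h1 : GLP (A.imp (dia γ B)))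
    (h2 : GLP (B.imp (dia γ C))) : GLP (A.imp (dia γ C)) :=
  comp h1 (comp (dia_cong γ h2) (dia_collapse γ C))

/-- ⊢ ⟨β⟩φ → ([β]ψ → ⟨β⟩(φ∧ψ)) -/
theorem kdia (β : L) (φ ψ : Formula L) :
    GLP ((dia β φ).imp ((Formula.box β ψ).imp (dia β (φ.and ψ)))) := by
  have t1 : GLP (ψ.imp (((φ.and ψ).neg).imp φ.neg)) := by
    have ha : GLP (ψ.imp (φ.imp (φ.and ψ))) := flipH (and_intro φ ψ)
    exact comp ha (cposO φ (φ.and ψ))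
  have c2 : GLP ((Formula.box β ψ).imp ((Formula.box β ((φ.and ψ).neg)).imp (Formula.box β φ.neg))) :=
    comp (box_cong β t1) (GLP.dist β _ _)
  have c3 : GLP ((Formula.box β ψ).imp (((Formula.box β φ.neg).neg).imp ((Formula.box β ((φ.and ψ).neg)).neg))) :=
    ctx_mp (wk _ (cposO (Formula.box β ((φ.and ψ).neg)) (Formula.box β φ.neg))) c2
  exact flipH c3

/-- J1 : for γ < β, ⊢ ⟨β⟩φ → (⟨γ⟩ψ → ⟨γ⟩(φ ∧ ⟨γ⟩ψ)) -/
theorem j1 {γ β : L} (h : γ < β) (φ ψ : Formula L) :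
    GLP ((dia β φ).imp ((dia γ ψ).imp (dia γ (φ.and (dia γ ψ))))) := by
  have k := kdia β φ (dia γ ψ)
  -- precompose second argument with negintro
  have k2 : GLP ((dia β φ).imp ((dia γ ψ).imp (dia β (φ.and (dia γ ψ))))) :=
    flipH (comp (GLP.negintro γ β ψ h) (flipH k))
  -- postcompose with dia_mono
  exact ctx_postcomp k2 (dia_mono (le_of_lt h))

end GLP
end ModalLayer

-- ===================== worm toolkit =====================
section WormLayer
variable {L : Type} [LinearOrder L]
namespace GLP

def wapp {L : Type} : List L → Formula L → Formula L
  | [], φ => φ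
  | β :: w, φ => dia β (wapp w φ)

theorem worm_eq_wapp (X Y : List L) : worm (X ++ Y) = wapp X (worm Y) := by
  induction X with
  | nil => rfl
  | cons β X ih => simp [worm, wapp, ih]

theorem wapp_mono {φ ψ : Formula L} (X : List L) (h : GLP (φ.imp ψ)) :
    GLP ((wapp X φ).imp (wapp X ψ)) := by
  induction X with
  | nil => exact h
  | cons β X ih => exact dia_cong β ih

/-- delete a tail: ⊢ worm (X++Y) → worm X -/
theorem worm_delete (X Y : List L) : GLP ((worm (X ++ Y)).imp (worm X)) := by
  have : worm X = wapp X (worm ([] : List L)) := by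
    simpa using worm_eq_wapp X []
  rw [worm_eq_wapp, this]
  exact wapp_mono X (imp_top _)

/-- suffix: X nonempty with modalities ≥ δ gives ⊢ worm (X++Y) → ⟨δ⟩ worm Y -/
theorem worm_suffix {δ : L} (X Y : List L) (hne : X ≠ [])
    (hm : ∀ β ∈ X, δ ≤ β) : GLP ((worm (X ++ Y)).imp (dia δ (worm Y))) := by
  induction X with
  | nil => exact absurd rfl hne
  | cons β X ih =>
    have hβ : δ ≤ β := hm β List.mem_cons_self
    cases X with
    | nil => exact dia_mono hβ
    | cons β' X' =>
      have h1 : GLP ((worm (β' :: X' ++ Y)).imp (dia δ (worm Y))) :=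
        ih (by simp) (fun x hx => hm x (List.mem_cons_of_mem _ hx))
      have : worm ((β :: (β' :: X')) ++ Y) = dia β (worm ((β' :: X') ++ Y)) := rfl
      rw [this]
      exact dia_trans (dia_mono hβ) h1

/-- block intro: bl with modalities > γ: ⊢ worm bl ∧ ⟨γ⟩ worm C → worm (bl ++ γ :: C) -/
theorem block_intro {γ : L} (bl C : List L) (hm : ∀ β ∈ bl, γ < β) :
    GLP (((worm bl).and (dia γ (worm C))).imp (worm (bl ++ γ :: C))) := by
  induction bl with
  | nil =>
    have : worm (([] : List L) ++ γ :: C) = dia γ (worm C) := rfl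
    rw [this]
    exact and_elim2 _ _
  | cons β bl ih =>
    have hβ : γ < β := hm β List.mem_cons_self
    have ih' := ih (fun x hx => hm x (List.mem_cons_of_mem _ hx))
    have e1 : GLP (((worm (β :: bl)).and (dia γ (worm C))).imp (dia β (worm bl))) :=
      and_elim1 _ _
    have e2 : GLP (((worm (β :: bl)).and (dia γ (worm C))).imp (Formula.box β (dia γ (worm C)))) :=
      comp (and_elim2 _ _) (GLP.negintro γ β (worm C) hβ)
    have k := kdia β (worm bl) (dia γ (worm C))
    have h3 : GLP (((worm (β :: bl)).and (dia γ (worm C))).imp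
        (dia β ((worm bl).and (dia γ (worm C))))) :=
      ctx_mp (comp e1 k) e2
    exact comp h3 (dia_cong β ih')

/-- combine: Q → ⟨β⟩ worm bl (β>γ), Q → ⟨γ⟩ worm R  gives  Q → ⟨γ⟩ worm (bl ++ γ :: R) -/
theorem step_dom {γ β : L} (hβ : γ < β) {Q : Formula L} (bl R : List L)
    (hm : ∀ x ∈ bl, γ < x)
    (h1 : GLP (Q.imp (dia β (worm bl)))) (h2 : GLP (Q.imp (dia γ (worm R)))) :
    GLP (Q.imp (dia γ (worm (bl ++ γ :: R)))) := by
  have j := j1 hβ (worm bl) (worm R)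
  have h3 : GLP (Q.imp (dia γ ((worm bl).and (dia γ (worm R))))) :=
    ctx_mp (comp h1 j) h2
  exact comp h3 (dia_cong γ (block_intro bl R hm))

end GLP
end WormLayer

-- ===================== joinSep / WNF layer =====================
section JoinLayer
variable {L : Type} [LinearOrder L]

theorem joinSep_cons (α : L) (p : List L) {ps : List (List L)} (h : ps ≠ []) :
    joinSep α (p :: ps) = p ++ α :: joinSep α ps := by
  cases ps with
  | nil => exact absurd rfl h
  | cons q qs => rfl

theorem joinSep_append_singleton (α : L) (p : List L) {ps : List (List L)} (h : ps ≠ []) :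
    joinSep α (ps ++ [p]) = joinSep α ps ++ α :: p := by
  induction ps with
  | nil => exact absurd rfl h
  | cons q qs ih =>
    cases qs with
    | nil => rfl
    | cons r rs =>
      have h1 : joinSep α ((q :: r :: rs) ++ [p]) = q ++ α :: joinSep α ((r :: rs) ++ [p]) := by
        exact joinSep_cons α q (by simp)
      rw [h1, ih (by simp), joinSep_cons α q (by simp)]
      simp

theorem joinSep_foldr (α : L) (p : List L) (ps : List (List L)) (T : List L) :
    joinSep α (ps ++ [p]) ++ T = ps.foldr (fun b acc => b ++ α :: acc) (p ++ T) := by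
  induction ps with
  | nil => rfl
  | cons q qs ih =>
    have h1 : joinSep α ((q :: qs) ++ [p]) = q ++ α :: joinSep α (qs ++ [p]) :=
      joinSep_cons α q (by simp)
    rw [h1]
    simp only [List.foldr_cons, ← ih, List.append_assoc, List.cons_append]

theorem mem_joinSep {α x : L} {parts : List (List L)} (h : x ∈ joinSep α parts) :
    x = α ∨ ∃ p ∈ parts, x ∈ p := by
  induction parts with
  | nil => simp [joinSep] at h
  | cons q qs ih =>
    cases qs with
    | nil =>
      simp [joinSep] at h
      exact Or.inr ⟨q, by simp, h⟩
    | cons r rs =>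
      rw [joinSep_cons α q (by simp)] at h
      rcases List.mem_append.1 h with h1 | h1
      · exact Or.inr ⟨q, by simp, h1⟩
      · rcases List.mem_cons.1 h1 with h2 | h2
        · exact Or.inl h2
        · rcases ih h2 with h3 | ⟨p, hp, hxp⟩
          · exact Or.inl h3
          · exact Or.inr ⟨p, List.mem_cons_of_mem _ hp, hxp⟩

theorem sep_mem_joinSep {α : L} {parts : List (List L)} (h : 2 ≤ parts.length) :
    α ∈ joinSep α parts := by
  match parts, h with
  | q :: r :: rs, _ =>
    rw [joinSep_cons α q (by simp)]
    simp

theorem Lt.trans' {s : L} {A B C : List L} (h1 : Lt s A B) (h2 : Lt s B C) : Lt s A C :=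
  GLP.dia_trans h2 h1

theorem Le.trans' {s : L} : Transitive (Le s) := by
  intro A B C h1 h2
  rcases h1 with h1 | rfl
  · rcases h2 with h2 | rfl
    · exact Or.inl (h1.trans' h2)
    · exact Or.inl h1
  · exact h2

/-- dominance engine -/
theorem engine {γ : L} {s : L} (hγ : γ < s) (Q : Formula L) (ps : List (List L)) (R : List L)
    (hps : ∀ b ∈ ps, (∀ x ∈ b, γ < x) ∧ GLP (Q.imp (dia s (worm b))))
    (hbase : GLP (Q.imp (dia γ (worm R)))) :
    GLP (Q.imp (dia γ (worm (ps.foldr (fun b acc => b ++ γ :: acc) R)))) := by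
  induction ps with
  | nil => exact hbase
  | cons b bs ih =>
    have h1 := hps b List.mem_cons_self
    have h2 := ih (fun x hx => hps x (List.mem_cons_of_mem _ hx))
    exact GLP.step_dom hγ _ _ h1.1 h1.2 h2

theorem exists_min {l : List L} (h : l ≠ []) : ∃ γ ∈ l, ∀ x ∈ l, γ ≤ x := by
  induction l with
  | nil => exact absurd rfl h
  | cons a l ih =>
    cases l with
    | nil => exact ⟨a, by simp⟩
    | cons b l' =>
      obtain ⟨γ, hγm, hγle⟩ := ih (by simp)
      rcases le_total a γ with hc | hc
      · exact ⟨a, by simp, by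
          intro x hx
          rcases List.mem_cons.1 hx with rfl | hx
          · exact le_rfl
          · exact hc.trans (hγle x hx)⟩
      · exact ⟨γ, List.mem_cons_of_mem _ hγm, by
          intro x hx
          rcases List.mem_cons.1 hx with rfl | hx
          · exact hc
          · exact hγle x hx⟩

end JoinLayer

-- ===================== decomposition and main lemma =====================
section MainLayer
variable {L : Type} [LinearOrder L] [SuccOrder L]

/-- strong ordering statement: A is below B robustly -/
def S (A B : List L) : Prop :=
  ∀ (δ : L) (T : List L), (∀ x ∈ A, δ ≤ x) → (∀ x ∈ B, δ ≤ x) →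
    GLP ((worm (B ++ T)).imp (dia δ (worm (A ++ T))))

theorem wnf_dec {A : List L} {γ : L} (hA : WNF A) (hne : A ≠ [])
    (hmin : ∀ x ∈ A, γ ≤ x) (hγA : γ ∈ A) :
    ∃ (ps : List (List L)) (p : List L),
      A = joinSep γ ps ++ γ :: p ∧
      (∀ T, A ++ T = ps.foldr (fun b acc => b ++ γ :: acc) (p ++ T)) ∧
      WNF (joinSep γ ps) ∧ WNF p ∧ (∀ x ∈ p, γ < x) ∧
      (∀ x ∈ joinSep γ ps, γ ≤ x) ∧
      (∀ b ∈ ps, (∀ x ∈ b, γ < x) ∧ Le (Order.succ γ) b p) := by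
  cases hA with
  | nil => exact absurd rfl hne
  | node β parts hlen hmods hwnf hord =>
    have hβγ : β = γ := by
      have hβm : β ∈ joinSep β parts := sep_mem_joinSep hlen
      have h1 : γ ≤ β := hmin β hβm
      rcases mem_joinSep hγA with h2 | ⟨p, hp, hγp⟩
      · exact h2.symm
      · exact absurd (hmods p hp γ hγp) (not_lt.2 h1)
    subst hβγ
    have hpne : parts ≠ [] := by
      intro h; rw [h] at hlen; simp at hlen
    set p := parts.getLast hpne with hpdef
    set ps := parts.dropLast with hpsdef
    have he : ps ++ [p] = parts := List.dropLast_append_getLast hpne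
    have hpmem : p ∈ parts := List.getLast_mem hpne
    have hpsne : ps ≠ [] := by
      intro h
      have : parts.length = 1 := by
        rw [← he, h]; rfl
      omega
    haveI : IsTrans (List L) (Le (Order.succ β)) := ⟨fun a b c h1 h2 => Le.trans' h1 h2⟩
    have hpw : List.Pairwise (Le (Order.succ β)) parts := List.isChain_iff_pairwise.1 hord
    have hpw2 : ∀ b ∈ ps, Le (Order.succ β) b p := by
      rw [← he] at hpw
      exact fun b hb => (List.pairwise_append.1 hpw).2.2 b hb p (by simp)
    have hmem_ps : ∀ b ∈ ps, b ∈ parts := fun b hb => by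
      rw [← he]; exact List.mem_append_left _ hb
    refine ⟨ps, p, ?_, ?_, ?_, hwnf p hpmem, hmods p hpmem, ?_, ?_⟩
    · rw [← he, joinSep_append_singleton β p hpsne]
    · intro T
      rw [← he, joinSep_foldr]
    · -- WNF (joinSep β ps)
      match ps, hpsne, hpw, hmem_ps with
      | [x], _, _, hm => exact hwnf x (hm x (by simp))
      | x :: y :: rest, _, hpw', hm =>
        exact WNF.node β (x :: y :: rest) (by simp)
          (fun b hb => hmods b (hm b hb)) (fun b hb => hwnf b (hm b hb))
          (List.isChain_iff_pairwise.2 (by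
            rw [← he] at hpw'
            exact (List.pairwise_append.1 hpw').1))
    · intro x hx
      rcases mem_joinSep hx with rfl | ⟨b, hb, hxb⟩
      · exact le_rfl
      · exact le_of_lt (hmods b (hmem_ps b hb) x hxb)
    · exact fun b hb => ⟨hmods b (hmem_ps b hb), hpw2 b hb⟩

end MainLayer

section MainLayer2
variable {L : Type} [LinearOrder L] [SuccOrder L]

theorem list_shift (x p T : List L) (γ : L) :
    (x ++ γ :: p) ++ T = (x ++ [γ]) ++ (p ++ T) := by
  simp [List.append_assoc]

theorem list_shift2 (x p T : List L) (γ : L) :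
    (x ++ γ :: p) ++ T = x ++ (γ :: (p ++ T)) := by
  simp [List.append_assoc]

/-- common suffix-extraction: A = Â ++ γ :: p with mods(Â) ≥ γ -/
theorem sfx {A Ahat p : List L} {γ : L} (hAeq : A = Ahat ++ γ :: p)
    (hm : ∀ x ∈ Ahat, γ ≤ x) (T : List L) :
    GLP ((worm (A ++ T)).imp (dia γ (worm (p ++ T)))) := by
  rw [hAeq, list_shift]
  exact GLP.worm_suffix _ _ (by simp) (by
    intro x hx
    rcases List.mem_append.1 hx with h | h
    · exact hm x h
    · simp at h; exact h.ge)

/-- the dominance core: if S p q where p is A's last block,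
all of A's blocks are ≤ p, q is a γ-free block, then q++T proves ⟨γ⟩(A++T). -/
theorem dom_core {γ : L} {ps : List (List L)} {p A q : List L}
    (hfold : ∀ T, A ++ T = ps.foldr (fun b acc => b ++ γ :: acc) (p ++ T))
    (hps : ∀ b ∈ ps, (∀ x ∈ b, γ < x) ∧ Le (Order.succ γ) b p)
    (hpm : ∀ x ∈ p, γ < x)
    (hqm : ∀ x ∈ q, γ < x)
    (hγs : γ < Order.succ γ)
    (hS : S p q) (T : List L) :
    GLP ((worm (q ++ T)).imp (dia γ (worm (A ++ T)))) := by
  have htop0 := hS (Order.succ γ) []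
    (fun x hx => Order.succ_le_of_lt (hpm x hx))
    (fun x hx => Order.succ_le_of_lt (hqm x hx))
  rw [List.append_nil, List.append_nil] at htop0
  have htop : GLP ((worm (q ++ T)).imp (dia (Order.succ γ) (worm p))) :=
    GLP.comp (GLP.worm_delete q T) htop0
  have hbase := hS γ T (fun x hx => (hpm x hx).le) (fun x hx => (hqm x hx).le)
  have heng := engine hγs (worm (q ++ T)) ps (p ++ T)
    (by
      intro b hb
      refine ⟨(hps b hb).1, ?_⟩
      rcases (hps b hb).2 with hlt | rfl
      · exact GLP.dia_trans htop hlt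
      · exact htop)
    hbase
  rw [← hfold T] at heng
  exact heng

/-- case: γ ∈ A, B is γ-free (a "block"). Input: comparison of p (A's last block) with B. -/
theorem block_cases {γ : L} {ps : List (List L)} {p A B : List L}
    (hAeq : A = joinSep γ ps ++ γ :: p)
    (hfold : ∀ T, A ++ T = ps.foldr (fun b acc => b ++ γ :: acc) (p ++ T))
    (hAhm : ∀ x ∈ joinSep γ ps, γ ≤ x)
    (hps : ∀ b ∈ ps, (∀ x ∈ b, γ < x) ∧ Le (Order.succ γ) b p)
    (hpm : ∀ x ∈ p, γ < x)
    (hBm : ∀ x ∈ B, γ < x) (hBne : B ≠ [])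
    (hγA : γ ∈ A)
    (rec : p = B ∨ S p B ∨ S B p) :
    S A B ∨ S B A := by
  have hγs : γ < Order.succ γ := by
    obtain ⟨x, hx⟩ := List.exists_mem_of_ne_nil B hBne
    exact Order.lt_succ_of_not_isMax (not_isMax_of_lt (hBm x hx))
  rcases rec with rfl | hS | hS
  · -- p = B : B is a suffix-part of A, so B < A
    right
    intro δ T hδB hδA
    exact GLP.comp (sfx hAeq hAhm T) (GLP.dia_mono (hδA γ hγA))
  · -- p < B : dominance gives A < B
    left
    intro δ T hδA hδB
    exact GLP.comp (dom_core hfold hps hpm hBm hγs hS T) (GLP.dia_mono (hδA γ hγA))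
  · -- B < p : B < A via suffix
    right
    intro δ T hδB hδA
    have h1 := hS γ T (fun x hx => (hBm x hx).le) (fun x hx => (hpm x hx).le)
    exact GLP.comp (GLP.dia_trans (sfx hAeq hAhm T) h1) (GLP.dia_mono (hδA γ hγA))

/-- case: γ ∈ A and γ ∈ B -/
theorem two_cases {γ : L} {psA psB : List (List L)} {p q A B : List L}
    (hAeq : A = joinSep γ psA ++ γ :: p)
    (hAfold : ∀ T, A ++ T = psA.foldr (fun b acc => b ++ γ :: acc) (p ++ T))
    (hAhm : ∀ x ∈ joinSep γ psA, γ ≤ x)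
    (hpsA : ∀ b ∈ psA, (∀ x ∈ b, γ < x) ∧ Le (Order.succ γ) b p)
    (hpm : ∀ x ∈ p, γ < x)
    (hBeq : B = joinSep γ psB ++ γ :: q)
    (hBfold : ∀ T, B ++ T = psB.foldr (fun b acc => b ++ γ :: acc) (q ++ T))
    (hBhm : ∀ x ∈ joinSep γ psB, γ ≤ x)
    (hpsB : ∀ b ∈ psB, (∀ x ∈ b, γ < x) ∧ Le (Order.succ γ) b q)
    (hqm : ∀ x ∈ q, γ < x)
    (hγA : γ ∈ A) (hγB : γ ∈ B)
    (recpq : p ≠ q → (S p q ∨ S q p))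
    (recAB : p = q → (joinSep γ psA = joinSep γ psB ∨
      S (joinSep γ psA) (joinSep γ psB) ∨ S (joinSep γ psB) (joinSep γ psA))) :
    A = B ∨ S A B ∨ S B A := by
  by_cases hpq : p = q
  · subst hpq
    rcases recAB rfl with he | hS | hS
    · left; rw [hAeq, hBeq, he]
    · right; left
      intro δ T hδA hδB
      have h := hS δ (γ :: (p ++ T))
        (fun x hx => hδA x (by rw [hAeq]; exact List.mem_append_left _ hx))
        (fun x hx => hδB x (by rw [hBeq]; exact List.mem_append_left _ hx))
      rw [hAeq, hBeq, list_shift2, list_shift2]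
      exact h
    · right; right
      intro δ T hδB hδA
      have h := hS δ (γ :: (p ++ T))
        (fun x hx => hδB x (by rw [hBeq]; exact List.mem_append_left _ hx))
        (fun x hx => hδA x (by rw [hAeq]; exact List.mem_append_left _ hx))
      rw [hAeq, hBeq, list_shift2, list_shift2]
      exact h
  · have hγs : γ < Order.succ γ := by
      have : p ≠ [] ∨ q ≠ [] := by
        by_contra hc
        push_neg at hc
        exact hpq (hc.1.trans hc.2.symm)
      rcases this with h | h
      · obtain ⟨x, hx⟩ := List.exists_mem_of_ne_nil p h
        exact Order.lt_succ_of_not_isMax (not_isMax_of_lt (hpm x hx))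
      · obtain ⟨x, hx⟩ := List.exists_mem_of_ne_nil q h
        exact Order.lt_succ_of_not_isMax (not_isMax_of_lt (hqm x hx))
    rcases recpq hpq with hS | hS
    · right; left
      intro δ T hδA hδB
      have s1 := sfx hBeq hBhm T
      have s2 := dom_core hAfold hpsA hpm hqm hγs hS T
      exact GLP.comp (GLP.dia_trans s1 s2) (GLP.dia_mono (hδA γ hγA))
    · right; right
      intro δ T hδB hδA
      have s1 := sfx hAeq hAhm T
      have s2 := dom_core hBfold hpsB hqm hpm hγs hS T
      exact GLP.comp (GLP.dia_trans s1 s2) (GLP.dia_mono (hδB γ hγB))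

end MainLayer2

section MainLayer3
variable {L : Type} [LinearOrder L] [SuccOrder L]

theorem tri : ∀ n, ∀ A B : List L, A.length + B.length ≤ n → WNF A → WNF B →
    A = B ∨ S A B ∨ S B A := by
  intro n
  induction n using Nat.strong_induction_on with
  | _ n ih =>
  intro A B hn hA hB
  by_cases hAe : A = []
  · by_cases hBe : B = []
    · left; rw [hAe, hBe]
    · right; left
      subst hAe
      intro δ T h1 h2
      rw [List.nil_append]
      exact GLP.worm_suffix B T hBe h2
  · by_cases hBe : B = []
    · right; right
      subst hBe
      intro δ T h1 h2
      rw [List.nil_append]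
      exact GLP.worm_suffix A T hAe h2
    · have hne : A ++ B ≠ [] := by simp [hAe]
      obtain ⟨γ, hγm, hγle⟩ := exists_min hne
      have hγAB := List.mem_append.1 hγm
      have hminA : ∀ x ∈ A, γ ≤ x := fun x hx => hγle x (List.mem_append_left _ hx)
      have hminB : ∀ x ∈ B, γ ≤ x := fun x hx => hγle x (List.mem_append_right _ hx)
      by_cases hγA : γ ∈ A
      · by_cases hγB : γ ∈ B
        · obtain ⟨psA, p, hAeq, hAfold, hAw, hpw, hpm, hAhm, hpsA⟩ :=
            wnf_dec hA hAe hminA hγA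
          obtain ⟨psB, q, hBeq, hBfold, hBw, hqw, hqm, hBhm, hpsB⟩ :=
            wnf_dec hB hBe hminB hγB
          have hlenA : A.length = (joinSep γ psA).length + p.length + 1 := by
            rw [hAeq]; simp; omega
          have hlenB : B.length = (joinSep γ psB).length + q.length + 1 := by
            rw [hBeq]; simp; omega
          apply two_cases hAeq hAfold hAhm hpsA hpm hBeq hBfold hBhm hpsB hqm hγA hγB
          · intro hpq
            have h := ih (p.length + q.length) (by omega) p q le_rfl hpw hqw
            exact h.resolve_left hpq
          · intro _
            exact ih ((joinSep γ psA).length + (joinSep γ psB).length) (by omega)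
              _ _ le_rfl hAw hBw
        · have hBm : ∀ x ∈ B, γ < x :=
            fun x hx => lt_of_le_of_ne (hminB x hx) (fun he => hγB (he ▸ hx))
          obtain ⟨psA, p, hAeq, hAfold, hAw, hpw, hpm, hAhm, hpsA⟩ :=
            wnf_dec hA hAe hminA hγA
          have hlenA : A.length = (joinSep γ psA).length + p.length + 1 := by
            rw [hAeq]; simp; omega
          have hrec := ih (p.length + B.length) (by omega) p B le_rfl hpw hB
          exact Or.inr (block_cases hAeq hAfold hAhm hpsA hpm hBm hBe hγA hrec)
      · have hγB : γ ∈ B := hγAB.resolve_left hγA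
        have hAm : ∀ x ∈ A, γ < x :=
          fun x hx => lt_of_le_of_ne (hminA x hx) (fun he => hγA (he ▸ hx))
        obtain ⟨psB, q, hBeq, hBfold, hBw, hqw, hqm, hBhm, hpsB⟩ :=
          wnf_dec hB hBe hminB hγB
        have hlenB : B.length = (joinSep γ psB).length + q.length + 1 := by
          rw [hBeq]; simp; omega
        have hrec := ih (q.length + A.length) (by omega) q A le_rfl hqw hA
        exact Or.inr (block_cases hBeq hBfold hBhm hpsB hqm hAm hAe hγB hrec).symm

end MainLayer3


/-- The relation `<_α` is total (as a trichotomy with equality) on worm normal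
forms all of whose modalities are `≥ α`. -/
theorem wnf_trichotomy {L : Type} [LinearOrder L] [SuccOrder L] (α : L)
    (A B : List L)
    (hAm : ∀ β ∈ A, α ≤ β) (hBm : ∀ β ∈ B, α ≤ β)
    (hA : WNF A) (hB : WNF B) :
    A = B ∨ Lt α A B ∨ Lt α B A := by
  rcases tri (A.length + B.length) A B le_rfl hA hB with he | hS | hS
  · exact Or.inl he
  · right; left
    have h := hS α [] hAm hBm
    rw [List.append_nil, List.append_nil] at h
    exact h
  · right; right
    have h := hS α [] hBm hAm
    rw [List.append_nil, List.append_nil] at h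
    exact h
end

section
/- For any worms A and B in worm normal form with all modalities ≥ α, either GLP_Λ proves ⟨α⟩A → ⟨α⟩B or GLP_Λ proves ⟨α⟩B → ⟨α⟩A. -/
open Formula

namespace WormProof

open Formula

variable {L : Type} [LinearOrder L]

/-! ### Propositional machinery -/

lemma imp_refl' {φ : Formula L} : GLP (φ.imp φ) :=
  GLP.mp _ _ (GLP.mp _ _ (GLP.k2 φ (φ.imp φ) φ) (GLP.k1 φ (φ.imp φ))) (GLP.k1 φ φ)

inductive Deriv (Γ : List (Formula L)) : Formula L → Prop
  | ax {φ} : GLP φ → Deriv Γ φ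
  | hyp {φ} : φ ∈ Γ → Deriv Γ φ
  | mp {φ ψ} : Deriv Γ (φ.imp ψ) → Deriv Γ φ → Deriv Γ ψ

lemma Deriv.ded {Γ} {ψ φ : Formula L} (h : Deriv (ψ :: Γ) φ) : Deriv Γ (ψ.imp φ) := by
  induction h with
  | ax h => exact .mp (.ax (GLP.k1 _ _)) (.ax h)
  | hyp h =>
    rcases List.mem_cons.mp h with rfl | h
    · exact .ax imp_refl'
    · exact .mp (.ax (GLP.k1 _ _)) (.hyp h)
  | mp _ _ ih1 ih2 => exact .mp (.mp (.ax (GLP.k2 _ _ _)) ih1) ih2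

lemma glp_of_deriv {φ : Formula L} (h : Deriv [] φ) : GLP φ := by
  induction h with
  | ax h => exact h
  | hyp h => simp at h
  | mp _ _ ih1 ih2 => exact GLP.mp _ _ ih1 ih2

lemma top_glp : GLP (Formula.top : Formula L) := imp_refl'

lemma imp_top (φ : Formula L) : GLP (φ.imp Formula.top) :=
  GLP.mp _ _ (GLP.k1 _ _) top_glp

lemma imp_trans {φ ψ χ : Formula L} (h1 : GLP (φ.imp ψ)) (h2 : GLP (ψ.imp χ)) :
    GLP (φ.imp χ) := by
  apply glp_of_deriv
  apply Deriv.ded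
  exact .mp (.ax h2) (.mp (.ax h1) (.hyp (by simp)))

lemma efq (φ : Formula L) : GLP (Formula.bot.imp φ) := by
  have h1 : GLP ((φ.neg.imp (Formula.bot.neg)).imp (Formula.bot.imp φ)) := GLP.k3 _ _
  exact GLP.mp _ _ h1 (GLP.mp _ _ (GLP.k1 _ _) imp_refl')

lemma dni (φ : Formula L) : GLP (φ.imp φ.neg.neg) := by
  apply glp_of_deriv
  apply Deriv.ded
  show Deriv [φ] (φ.neg.imp Formula.bot)
  apply Deriv.ded
  have h1 : Deriv [φ.neg, φ] (φ.imp Formula.bot) := .hyp (by simp [Formula.neg])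
  have h2 : Deriv [φ.neg, φ] φ := .hyp (by simp)
  exact .mp h1 h2

lemma cp_of {φ ψ : Formula L} (h : GLP (φ.imp ψ)) : GLP (ψ.neg.imp φ.neg) := by
  apply glp_of_deriv
  apply Deriv.ded
  show Deriv [ψ.neg] (φ.imp Formula.bot)
  apply Deriv.ded
  have h1 : Deriv [φ, ψ.neg] (ψ.imp Formula.bot) := .hyp (by simp [Formula.neg])
  exact .mp h1 (.mp (.ax h) (.hyp (by simp)))

lemma cp2_of {φ ψ : Formula L} (h : GLP (ψ.neg.imp φ.neg)) : GLP (φ.imp ψ) :=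
  GLP.mp _ _ (GLP.k3 _ _) h

lemma t_and_pair (φ ψ : Formula L) : GLP (φ.imp (ψ.imp (φ.and ψ))) := by
  apply glp_of_deriv
  apply Deriv.ded
  apply Deriv.ded
  show Deriv [ψ, φ] ((φ.imp ψ.neg).imp Formula.bot)
  apply Deriv.ded
  have h1 : Deriv [φ.imp ψ.neg, ψ, φ] (φ.imp ψ.neg) := .hyp (by simp)
  have h2 : Deriv [φ.imp ψ.neg, ψ, φ] φ := .hyp (by simp)
  have h3 : Deriv [φ.imp ψ.neg, ψ, φ] (ψ.imp Formula.bot) := .mp h1 h2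
  exact .mp h3 (.hyp (by simp))

lemma t_and_left (φ ψ : Formula L) : GLP ((φ.and ψ).imp φ) := by
  apply cp2_of
  show GLP (φ.neg.imp ((φ.imp ψ.neg).imp Formula.bot).neg)
  apply glp_of_deriv
  apply Deriv.ded
  -- goal: Deriv [φ.neg] (((φ.imp ψ.neg).imp bot).imp bot)
  apply Deriv.ded
  have h1 : Deriv [(φ.imp ψ.neg).imp Formula.bot, φ.neg] (φ.imp ψ.neg) := by
    apply Deriv.ded
    have ha : Deriv [φ, (φ.imp ψ.neg).imp Formula.bot, φ.neg] (φ.imp Formula.bot) :=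
      .hyp (by simp [Formula.neg])
    have ha2 : Deriv [φ, (φ.imp ψ.neg).imp Formula.bot, φ.neg] φ := .hyp (by simp)
    have hb : Deriv [φ, (φ.imp ψ.neg).imp Formula.bot, φ.neg] Formula.bot := .mp ha ha2
    exact .mp (.ax (efq ψ.neg)) hb
  exact .mp (.hyp (by simp)) h1

lemma t_and_right (φ ψ : Formula L) : GLP ((φ.and ψ).imp ψ) := by
  apply cp2_of
  show GLP (ψ.neg.imp ((φ.imp ψ.neg).imp Formula.bot).neg)
  have h1 : GLP (ψ.neg.imp (φ.imp ψ.neg)) := GLP.k1 _ _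
  exact imp_trans h1 (dni _)

lemma and_intro_glp {χ φ ψ : Formula L} (h1 : GLP (χ.imp φ)) (h2 : GLP (χ.imp ψ)) :
    GLP (χ.imp (φ.and ψ)) := by
  apply glp_of_deriv
  apply Deriv.ded
  have hφ : Deriv [χ] φ := .mp (.ax h1) (.hyp (by simp))
  have hψ : Deriv [χ] ψ := .mp (.ax h2) (.hyp (by simp))
  exact .mp (.mp (.ax (t_and_pair _ _)) hφ) hψ

lemma and_mono_l {x x' y : Formula L} (h : GLP (x.imp x')) :
    GLP ((x.and y).imp (x'.and y)) :=
  and_intro_glp (imp_trans (t_and_left _ _) h) (t_and_right _ _)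

/-! ### Modal toolkit -/

lemma box_mono {a : L} {φ ψ : Formula L} (h : GLP (φ.imp ψ)) :
    GLP ((Formula.box a φ).imp (Formula.box a ψ)) :=
  GLP.mp _ _ (GLP.dist a φ ψ) (GLP.nec a _ h)

lemma dia_mono {a : L} {φ ψ : Formula L} (h : GLP (φ.imp ψ)) :
    GLP ((Formula.dia a φ).imp (Formula.dia a ψ)) :=
  cp_of (box_mono (cp_of h))

lemma dia_le {a c : L} (hac : a ≤ c) (φ : Formula L) :
    GLP ((Formula.dia c φ).imp (Formula.dia a φ)) :=
  cp_of (GLP.mono a c φ.neg hac)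

lemma dia_inner {a c : L} (hac : a ≤ c) (φ : Formula L) :
    GLP ((Formula.dia c (Formula.dia a φ)).imp (Formula.dia a φ)) := by
  have h1 : GLP ((Formula.box a φ.neg).imp (Formula.box c (Formula.box a φ.neg))) :=
    GLP.trans a c φ.neg hac
  have h2 : GLP ((Formula.box c (Formula.box a φ.neg)).imp
      (Formula.box c ((Formula.dia a φ).neg))) :=
    box_mono (dni _)
  exact cp_of (imp_trans h1 h2)

lemma box_conj_dia {c : L} {x z : Formula L} :
    GLP (((Formula.dia c x).and (Formula.box c z)).imp (Formula.dia c (x.and z))) := by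
  have t : GLP ((x.and z).neg.imp (z.imp x.neg)) := by
    apply glp_of_deriv
    apply Deriv.ded; apply Deriv.ded
    show Deriv [z, (x.and z).neg] (x.imp Formula.bot)
    apply Deriv.ded
    have hxz : Deriv [x, z, (x.and z).neg] (x.and z) := by
      have hp : Deriv [x, z, (x.and z).neg] (x.imp (z.imp (x.and z))) := .ax (t_and_pair _ _)
      exact .mp (.mp hp (.hyp (by simp))) (.hyp (by simp))
    exact .mp (.hyp (by simp [Formula.neg])) hxz
  have bb : GLP ((Formula.box c ((x.and z).neg)).imp
      ((Formula.box c z).imp (Formula.box c x.neg))) :=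
    imp_trans (box_mono t) (GLP.dist c z x.neg)
  apply glp_of_deriv
  apply Deriv.ded
  show Deriv [(Formula.dia c x).and (Formula.box c z)]
      ((Formula.box c ((x.and z).neg)).imp Formula.bot)
  apply Deriv.ded
  have hand : Deriv [Formula.box c ((x.and z).neg), (Formula.dia c x).and (Formula.box c z)]
      ((Formula.dia c x).and (Formula.box c z)) := .hyp (by simp)
  have hdia : Deriv [Formula.box c ((x.and z).neg), (Formula.dia c x).and (Formula.box c z)]
      ((Formula.box c x.neg).imp Formula.bot) := by
    have := Deriv.mp (.ax (t_and_left (Formula.dia c x) (Formula.box c z))) hand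
    exact this
  have hz : Deriv [Formula.box c ((x.and z).neg), (Formula.dia c x).and (Formula.box c z)]
      (Formula.box c z) := .mp (.ax (t_and_right _ _)) hand
  have hbnx : Deriv [Formula.box c ((x.and z).neg), (Formula.dia c x).and (Formula.box c z)]
      (Formula.box c x.neg) := .mp (.mp (.ax bb) (.hyp (by simp))) hz
  exact .mp hdia hbnx

lemma fact4 {a c : L} (hac : a < c) {x y : Formula L} :
    GLP (((Formula.dia c x).and (Formula.dia a y)).imp
      (Formula.dia c (x.and (Formula.dia a y)))) := by
  have n1 : GLP ((Formula.dia a y).imp (Formula.box c (Formula.dia a y))) :=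
    GLP.negintro a c y hac
  have h1 : GLP (((Formula.dia c x).and (Formula.dia a y)).imp
      ((Formula.dia c x).and (Formula.box c (Formula.dia a y)))) :=
    and_intro_glp (t_and_left _ _) (imp_trans (t_and_right _ _) n1)
  exact imp_trans h1 box_conj_dia

end WormProof
set_option linter.unusedSectionVars false

namespace WormProof

open Formula

variable {L : Type} [LinearOrder L]

/-! ### Worm lemmas -/

lemma worm_cons (x : L) (w : List L) : worm (x :: w) = Formula.dia x (worm w) := rfl

lemma worm_nil : (worm ([] : List L)) = Formula.top := rfl

/-- worms with all modalities ≥ β imply the β-consistency of their tails -/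
lemma worm_tail {β : L} : ∀ (C : List L), (∀ x ∈ C, β ≤ x) → ∀ (X : List L),
    GLP ((worm (C ++ β :: X)).imp (Formula.dia β (worm X))) := by
  intro C
  induction C with
  | nil => intro _ X; exact imp_refl'
  | cons c C' ih =>
    intro hC X
    have hc : β ≤ c := hC c (by simp)
    have ih' := ih (fun x hx => hC x (by simp [hx])) X
    show GLP ((Formula.dia c (worm (C' ++ β :: X))).imp (Formula.dia β (worm X)))
    exact imp_trans (dia_mono ih') (dia_inner hc _)

/-- splitting a worm at a separator below all prefix modalities -/
lemma worm_split {β : L} : ∀ (C : List L), (∀ x ∈ C, β < x) → ∀ (X : List L),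
    GLP ((worm (C ++ β :: X)).imp ((worm C).and (Formula.dia β (worm X)))) := by
  intro C
  induction C with
  | nil =>
    intro _ X
    exact and_intro_glp (imp_top _) imp_refl'
  | cons c C' ih =>
    intro hC X
    have hc : β < c := hC c (by simp)
    have ih' := ih (fun x hx => hC x (by simp [hx])) X
    show GLP ((Formula.dia c (worm (C' ++ β :: X))).imp
      ((Formula.dia c (worm C')).and (Formula.dia β (worm X))))
    apply and_intro_glp
    · exact dia_mono (imp_trans ih' (t_and_left _ _))
    · exact imp_trans (dia_mono (imp_trans ih' (t_and_right _ _))) (dia_inner hc.le _)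

/-- gluing a worm: converse of worm_split -/
lemma worm_glue {β : L} : ∀ (C : List L), (∀ x ∈ C, β < x) → ∀ (X : List L),
    GLP (((worm C).and (Formula.dia β (worm X))).imp (worm (C ++ β :: X))) := by
  intro C
  induction C with
  | nil => intro _ X; exact t_and_right _ _
  | cons c C' ih =>
    intro hC X
    have hc : β < c := hC c (by simp)
    have ih' := ih (fun x hx => hC x (by simp [hx])) X
    show GLP (((Formula.dia c (worm C')).and (Formula.dia β (worm X))).imp
      (Formula.dia c (worm (C' ++ β :: X))))
    exact imp_trans (fact4 hc) (dia_mono ih')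

lemma lt_nil_cons {α x : L} {w : List L} (hx : α ≤ x) : Lt α [] (x :: w) := by
  show GLP ((Formula.dia x (worm w)).imp (Formula.dia α (worm [])))
  exact imp_trans (dia_mono (imp_top _)) (dia_le hx _)

/-! ### Lt / Le facts -/

lemma Lt_trans' {b : L} {x y z : List L} (h1 : Lt b x y) (h2 : Lt b y z) : Lt b x z :=
  imp_trans h2 (imp_trans (dia_mono h1) (dia_inner le_rfl _))

lemma Le_trans' {b : L} {x y z : List L} (h1 : Le b x y) (h2 : Le b y z) : Le b x z := by
  rcases h1 with h1 | rfl
  · rcases h2 with h2 | rfl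
    · exact Or.inl (Lt_trans' h1 h2)
    · exact Or.inl h1
  · exact h2

lemma Lt_mono_level {a b : L} (hab : a ≤ b) {A B : List L} (h : Lt b A B) : Lt a A B :=
  imp_trans h (dia_le hab _)

/-! ### joinSep facts -/

lemma joinSep_cons (β : L) (p : List L) (ps : List (List L)) (h : ps ≠ []) :
    joinSep β (p :: ps) = p ++ β :: joinSep β ps := by
  cases ps with
  | nil => exact absurd rfl h
  | cons q qs => rfl

lemma joinSep_append (β : L) : ∀ (Xs Ys : List (List L)), Xs ≠ [] → Ys ≠ [] →
    joinSep β (Xs ++ Ys) = joinSep β Xs ++ β :: joinSep β Ys := by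
  intro Xs
  induction Xs with
  | nil => intro Ys h _; exact absurd rfl h
  | cons x xs ih =>
    intro Ys _ hY
    cases xs with
    | nil =>
      simp only [List.nil_append, List.singleton_append]
      rw [joinSep_cons β x Ys hY]
      rfl
    | cons x' xs' =>
      have h1 : joinSep β ((x :: x' :: xs') ++ Ys) = x ++ β :: joinSep β ((x' :: xs') ++ Ys) := by
        rw [List.cons_append, joinSep_cons β x _ (by simp)]
      rw [h1, ih Ys (by simp) hY, joinSep_cons β x (x' :: xs') (by simp)]
      simp [List.append_assoc]

lemma mem_joinSep {β : L} : ∀ {Zs : List (List L)} {x : L}, x ∈ joinSep β Zs →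
    x = β ∨ ∃ p ∈ Zs, x ∈ p := by
  intro Zs
  induction Zs with
  | nil => intro x hx; simp [joinSep] at hx
  | cons p ps ih =>
    intro x hx
    cases ps with
    | nil => exact Or.inr ⟨p, by simp, hx⟩
    | cons q qs =>
      rw [joinSep_cons β p _ (by simp)] at hx
      rcases List.mem_append.mp hx with h | h
      · exact Or.inr ⟨p, by simp, h⟩
      · rcases List.mem_cons.mp h with rfl | h
        · exact Or.inl rfl
        · rcases ih h with h | ⟨r, hr, hxr⟩
          · exact Or.inl h
          · exact Or.inr ⟨r, by simp [hr], hxr⟩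

lemma mem_joinSep_le {β : L} {Zs : List (List L)} (hm : ∀ p ∈ Zs, ∀ y ∈ p, β < y) :
    ∀ x ∈ joinSep β Zs, β ≤ x := by
  intro x hx
  rcases mem_joinSep hx with rfl | ⟨p, hp, hxp⟩
  · exact le_rfl
  · exact (hm p hp x hxp).le

lemma sep_mem {β : L} {Zs : List (List L)} (h : 2 ≤ Zs.length) : β ∈ joinSep β Zs := by
  match Zs, h with
  | p :: q :: qs, _ =>
    rw [joinSep_cons β p _ (by simp)]
    simp

lemma joinSep_ne_nil {β : L} {Zs : List (List L)} (h : 2 ≤ Zs.length) :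
    joinSep β Zs ≠ [] := by
  match Zs, h with
  | p :: q :: qs, _ =>
    rw [joinSep_cons β p _ (by simp)]
    simp

lemma joinSep_len0 (β : L) : ∀ (Zs : List (List L)), Zs.length ≤ (joinSep β Zs).length + 1 := by
  intro Zs
  induction Zs with
  | nil => simp
  | cons q rest ih =>
    cases rest with
    | nil => simp [joinSep]
    | cons q' rest' =>
      rw [joinSep_cons β q _ (by simp)]
      simp only [List.length_cons, List.length_append] at ih ⊢
      omega

lemma joinSep_len (β : L) : ∀ (Zs : List (List L)), ∀ p ∈ Zs,
    p.length + Zs.length ≤ (joinSep β Zs).length + 1 := by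
  intro Zs
  induction Zs with
  | nil => intro p hp; simp at hp
  | cons q rest ih =>
    intro p hp
    cases rest with
    | nil =>
      rcases List.mem_cons.mp hp with rfl | h
      · simp [joinSep]
      · simp at h
    | cons q' rest' =>
      rw [joinSep_cons β q _ (by simp)]
      simp only [List.length_cons, List.length_append]
      rcases List.mem_cons.mp hp with rfl | h
      · have := joinSep_len0 β (q' :: rest')
        simp only [List.length_cons] at this
        omega
      · have := ih p h
        simp only [List.length_cons] at this
        omega

lemma block_len_lt {β : L} {Zs : List (List L)} {p : List L} (hp : p ∈ Zs)
    (h2 : 2 ≤ Zs.length) : p.length < (joinSep β Zs).length := by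
  have := joinSep_len β Zs p hp
  omega

end WormProof
set_option linter.unusedSectionVars false

namespace WormProof

open Formula

variable {L : Type} [LinearOrder L]

/-- Key descent lemma: if `H` gives `b`-consistency of the block `r` (and the
`β`-part of the tail), then `H` gives `β`-consistency of the whole worm obtained
by prepending blocks `≤ r` to `r` followed by the tail `E`. -/
lemma RD (β b : L) (hb : β < b) (r E : List L) (H : Formula L)
    (hr : ∀ x ∈ r, β < x)
    (hH : GLP (H.imp (Formula.dia b (worm r))))
    (hbase : GLP (H.imp (Formula.dia β (worm (r ++ E))))) :
    ∀ Ps : List (List L), (∀ p ∈ Ps, (∀ x ∈ p, β < x) ∧ Le b p r) →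
      GLP (H.imp (Formula.dia β (worm (joinSep β (Ps ++ [r]) ++ E)))) := by
  intro Ps
  induction Ps with
  | nil => intro _; simpa [joinSep] using hbase
  | cons p Ps ih =>
    intro hPs
    have hrest := ih (fun q hq => hPs q (List.mem_cons_of_mem _ hq))
    have hcons : joinSep β ((p :: Ps) ++ [r]) = p ++ β :: joinSep β (Ps ++ [r]) := by
      rw [List.cons_append]; exact joinSep_cons β p _ (by simp)
    have hlist : joinSep β ((p :: Ps) ++ [r]) ++ E
        = p ++ β :: (joinSep β (Ps ++ [r]) ++ E) := by
      rw [hcons]; simp [List.append_assoc]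
    rw [hlist]
    set R := joinSep β (Ps ++ [r]) ++ E with hR
    have hmp := hPs p (by simp)
    have hall : GLP (H.imp (Formula.dia b ((worm r).and (Formula.dia β (worm R))))) :=
      imp_trans (and_intro_glp hH hrest) (fact4 hb)
    rcases hmp.2 with hlt | heq
    · -- hlt : Lt b p r
      have hlt' : GLP ((worm r).imp (Formula.dia b (worm p))) := hlt
      have inner : GLP (((worm r).and (Formula.dia β (worm R))).imp
          (Formula.dia b (worm (p ++ β :: R)))) :=
        imp_trans (and_mono_l hlt') (imp_trans (fact4 hb) (dia_mono (worm_glue p hmp.1 R)))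
      exact imp_trans hall (imp_trans (dia_mono inner)
        (imp_trans (dia_inner le_rfl _) (dia_le hb.le _)))
    · subst heq
      have inner : GLP (((worm p).and (Formula.dia β (worm R))).imp (worm (p ++ β :: R))) :=
        worm_glue p hmp.1 R
      exact imp_trans hall (imp_trans (dia_mono inner) (dia_le hb.le _))

/-- Comparing two worms which agree after the first (from the right) differing block. -/
lemma stripLt (β b : L) (hb : β < b) (r t : List L) (Ps Qs S : List (List L))
    (hr : ∀ x ∈ r, β < x) (ht : ∀ x ∈ t, β < x)
    (hPs : ∀ p ∈ Ps, (∀ x ∈ p, β < x) ∧ Le b p r)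
    (hQs : ∀ q ∈ Qs, ∀ x ∈ q, β < x)
    (hS : ∀ p ∈ S, ∀ x ∈ p, β < x)
    (hLt : GLP ((worm t).imp (Formula.dia b (worm r)))) :
    GLP ((worm (joinSep β (Qs ++ [t] ++ S))).imp
      (Formula.dia β (worm (joinSep β (Ps ++ [r] ++ S))))) := by
  cases S with
  | nil =>
    rw [List.append_nil, List.append_nil]
    have hRD := RD β b hb r [] (Formula.dia b (worm r)) hr imp_refl'
        (by simpa using dia_le hb.le (worm r)) Ps hPs
    rw [List.append_nil] at hRD
    cases Qs with
    | nil =>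
      simp only [List.nil_append]
      have hjt : joinSep β [t] = t := rfl
      rw [hjt]
      exact imp_trans hLt hRD
    | cons q Qs' =>
      have hsplit : joinSep β ((q :: Qs') ++ [t]) = joinSep β (q :: Qs') ++ β :: t := by
        rw [joinSep_append β (q :: Qs') [t] (by simp) (by simp)]
        rfl
      rw [hsplit]
      have hmods : ∀ x ∈ joinSep β (q :: Qs'), β ≤ x := mem_joinSep_le hQs
      have h2 := worm_tail (joinSep β (q :: Qs')) hmods t
      exact imp_trans h2 (imp_trans (dia_mono (imp_trans hLt hRD)) (dia_inner le_rfl _))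
  | cons s S' =>
    set JS := joinSep β (s :: S') with hJS
    have hbase : GLP (((Formula.dia b (worm r)).and (Formula.dia β (worm JS))).imp
        (Formula.dia β (worm (r ++ β :: JS)))) :=
      imp_trans (fact4 hb) (imp_trans (dia_mono (worm_glue r hr JS)) (dia_le hb.le _))
    have hRD := RD β b hb r (β :: JS) ((Formula.dia b (worm r)).and (Formula.dia β (worm JS)))
        hr (t_and_left _ _) hbase Ps hPs
    have hJA : joinSep β (Ps ++ [r] ++ (s :: S')) = joinSep β (Ps ++ [r]) ++ β :: JS := by
      rw [joinSep_append β (Ps ++ [r]) (s :: S') (by simp) (by simp)]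
    rw [hJA]
    -- toH : worm (t ++ β :: JS) implies the hypothesis of hRD
    have toH : GLP ((worm (t ++ β :: JS)).imp
        ((Formula.dia b (worm r)).and (Formula.dia β (worm JS)))) :=
      imp_trans (worm_split t ht JS) (and_mono_l hLt)
    cases Qs with
    | nil =>
      have hJB : joinSep β ([t] ++ (s :: S')) = t ++ β :: JS := by
        rw [List.singleton_append, joinSep_cons β t _ (by simp)]
      rw [List.nil_append, hJB]
      exact imp_trans toH hRD
    | cons q Qs' =>
      have hJB : joinSep β ((q :: Qs') ++ [t] ++ (s :: S'))
          = joinSep β (q :: Qs') ++ β :: (t ++ β :: JS) := by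
        rw [List.append_assoc, joinSep_append β (q :: Qs') ([t] ++ (s :: S')) (by simp) (by simp)]
        rw [List.singleton_append, joinSep_cons β t _ (by simp)]
      rw [hJB]
      have hmods : ∀ x ∈ joinSep β (q :: Qs'), β ≤ x := mem_joinSep_le hQs
      have h2 := worm_tail (joinSep β (q :: Qs')) hmods (t ++ β :: JS)
      exact imp_trans h2 (imp_trans (dia_mono (imp_trans toH hRD)) (dia_inner le_rfl _))

/-- A worm is `β`-smaller than any extension of it by extra blocks on the left. -/
lemma lt_of_suffix (β : L) (Zs S : List (List L)) (hZ : Zs ≠ [])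
    (hmZ : ∀ p ∈ Zs, ∀ x ∈ p, β < x) (hmS : ∀ p ∈ S, ∀ x ∈ p, β < x) :
    Lt β (joinSep β S) (joinSep β (Zs ++ S)) ∨ joinSep β (Zs ++ S) = joinSep β S := by
  cases S with
  | nil =>
    rw [List.append_nil]
    cases hJ : joinSep β Zs with
    | nil => exact Or.inr rfl
    | cons x w =>
      left
      have hx : β ≤ x := by
        have : x ∈ joinSep β Zs := by rw [hJ]; simp
        exact mem_joinSep_le hmZ x this
      show Lt β (joinSep β ([] : List (List L))) (x :: w)
      have : joinSep β ([] : List (List L)) = [] := rfl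
      rw [this]
      exact lt_nil_cons hx
  | cons s S' =>
    left
    have hJB : joinSep β (Zs ++ (s :: S')) = joinSep β Zs ++ β :: joinSep β (s :: S') :=
      joinSep_append β Zs (s :: S') hZ (by simp)
    show GLP ((worm (joinSep β (Zs ++ (s :: S')))).imp _)
    rw [hJB]
    exact worm_tail (joinSep β Zs) (mem_joinSep_le hmZ) (joinSep β (s :: S'))

end WormProof
set_option linter.unusedSectionVars false
set_option maxHeartbeats 1000000

namespace WormProof

open Formula

variable {L : Type} [LinearOrder L]

lemma strip [SuccOrder L] (β : L) (RA : List (List L)) :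
    ∀ (RB S LA LB : List (List L)),
      LA = RA.reverse ++ S → LB = RB.reverse ++ S →
      (∀ p ∈ LA, ∀ x ∈ p, β < x) → (∀ p ∈ LB, ∀ x ∈ p, β < x) →
      List.Pairwise (Le (Order.succ β)) LA → List.Pairwise (Le (Order.succ β)) LB →
      (∀ r ∈ RA, ∀ t ∈ RB, Lt (Order.succ β) r t ∨ Lt (Order.succ β) t r ∨ r = t) →
      Lt β (joinSep β LA) (joinSep β LB) ∨ Lt β (joinSep β LB) (joinSep β LA) ∨
        joinSep β LA = joinSep β LB := by
  induction RA with
  | nil =>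
    intro RB S LA LB hLA hLB hmA hmB hpA hpB orc
    simp only [List.reverse_nil, List.nil_append] at hLA
    subst hLA
    cases RB with
    | nil =>
      simp only [List.reverse_nil, List.nil_append] at hLB
      subst hLB
      exact Or.inr (Or.inr rfl)
    | cons t RB' =>
      subst hLB
      rcases lt_of_suffix β ((t :: RB').reverse) LA (by simp)
          (fun p hp => hmB p (List.mem_append_left _ hp))
          (fun p hp => hmB p (List.mem_append_right _ hp)) with h | h
      · exact Or.inl h
      · exact Or.inr (Or.inr h.symm)
  | cons r RA' ih =>
    intro RB S LA LB hLA hLB hmA hmB hpA hpB orc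
    cases RB with
    | nil =>
      simp only [List.reverse_nil, List.nil_append] at hLB
      subst hLB
      subst hLA
      rcases lt_of_suffix β ((r :: RA').reverse) LB (by simp)
          (fun p hp => hmA p (List.mem_append_left _ hp))
          (fun p hp => hmA p (List.mem_append_right _ hp)) with h | h
      · exact Or.inr (Or.inl h)
      · exact Or.inr (Or.inr h)
    | cons t RB' =>
      have hrLA : r ∈ LA := by
        rw [hLA, List.reverse_cons]
        exact List.mem_append_left _ (List.mem_append_right _ (by simp))
      have htLB : t ∈ LB := by
        rw [hLB, List.reverse_cons]
        exact List.mem_append_left _ (List.mem_append_right _ (by simp))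
      have hbor : β < Order.succ β ∨ r = t := by
        rcases List.eq_nil_or_concat r with hr0 | ⟨u, x, hr0⟩
        · rcases List.eq_nil_or_concat t with ht0 | ⟨v, y, ht0⟩
          · exact Or.inr (hr0.trans ht0.symm)
          · have hy : β < y := hmB t htLB y (by simp [ht0])
            exact Or.inl (Order.lt_succ_of_not_isMax hy.not_isMax)
        · have hx : β < x := hmA r hrLA x (by simp [hr0])
          exact Or.inl (Order.lt_succ_of_not_isMax hx.not_isMax)
      -- the "equal heads" continuation
      have equalPath : r = t →
          Lt β (joinSep β LA) (joinSep β LB) ∨ Lt β (joinSep β LB) (joinSep β LA) ∨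
            joinSep β LA = joinSep β LB := by
        intro heq
        subst heq
        apply ih RB' (r :: S) LA LB ?_ ?_ hmA hmB hpA hpB ?_
        · rw [hLA, List.reverse_cons, List.append_assoc]; rfl
        · rw [hLB, List.reverse_cons, List.append_assoc]; rfl
        · exact fun r' hr' t' ht' =>
            orc r' (List.mem_cons_of_mem _ hr') t' (List.mem_cons_of_mem _ ht')
      rcases hbor with hb | heq
      · rcases orc r (by simp) t (by simp) with hrt | htr | heq
        · -- r < t at level succ β : A-side smaller
          left
          have hLA' : LA = RA'.reverse ++ [r] ++ S := by rw [hLA, List.reverse_cons]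
          have hLB' : LB = RB'.reverse ++ [t] ++ S := by rw [hLB, List.reverse_cons]
          rw [hLA', hLB']
          have hpA' : List.Pairwise (Le (Order.succ β)) (RA'.reverse ++ (r :: S)) := by
            rw [hLA', List.append_assoc, List.singleton_append] at hpA
            exact hpA
          exact stripLt β (Order.succ β) hb r t RA'.reverse RB'.reverse S
            (hmA r hrLA) (hmB t htLB)
            (fun p hp => ⟨hmA p (by rw [hLA']; exact List.mem_append_left _ (List.mem_append_left _ hp)),
              (List.pairwise_append.mp hpA').2.2 p hp r (by simp)⟩)
            (fun q hq => hmB q (by rw [hLB']; exact List.mem_append_left _ (List.mem_append_left _ hq)))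
            (fun p hp => hmA p (by rw [hLA']; exact List.mem_append_right _ hp))
            hrt
        · -- t < r : B-side smaller
          right; left
          have hLA' : LA = RA'.reverse ++ [r] ++ S := by rw [hLA, List.reverse_cons]
          have hLB' : LB = RB'.reverse ++ [t] ++ S := by rw [hLB, List.reverse_cons]
          rw [hLA', hLB']
          have hpB' : List.Pairwise (Le (Order.succ β)) (RB'.reverse ++ (t :: S)) := by
            rw [hLB', List.append_assoc, List.singleton_append] at hpB
            exact hpB
          exact stripLt β (Order.succ β) hb t r RB'.reverse RA'.reverse S
            (hmB t htLB) (hmA r hrLA)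
            (fun p hp => ⟨hmB p (by rw [hLB']; exact List.mem_append_left _ (List.mem_append_left _ hp)),
              (List.pairwise_append.mp hpB').2.2 p hp t (by simp)⟩)
            (fun q hq => hmA q (by rw [hLA']; exact List.mem_append_left _ (List.mem_append_left _ hq)))
            (fun p hp => hmB p (by rw [hLB']; exact List.mem_append_right _ hp))
            htr
        · exact equalPath heq
      · exact equalPath heq

lemma tri [SuccOrder L] : ∀ (n : ℕ) (α : L) (A B : List L),
    A.length + B.length ≤ n →
    (∀ x ∈ A, α ≤ x) → (∀ x ∈ B, α ≤ x) → WNF A → WNF B →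
    Lt α A B ∨ Lt α B A ∨ A = B := by
  intro n
  induction n with
  | zero =>
    intro α A B hlen _ _ _ _
    cases A with
    | nil =>
      cases B with
      | nil => exact Or.inr (Or.inr rfl)
      | cons b B' => simp at hlen
    | cons a A' => simp at hlen
  | succ n ih =>
    intro α A B hlen hAm hBm hA hB
    cases hA with
    | nil =>
      cases hB with
      | nil => exact Or.inr (Or.inr rfl)
      | node γB PB hlenB hmodsB hwnfB hordB =>
        left
        cases hJ : joinSep γB PB with
        | nil => exact absurd hJ (joinSep_ne_nil hlenB)
        | cons x w =>
          have hx : α ≤ x := hBm x (by rw [hJ]; simp)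
          exact lt_nil_cons hx
    | node γA PA hlenA hmodsA hwnfA hordA =>
      cases hB with
      | nil =>
        right; left
        cases hJ : joinSep γA PA with
        | nil => exact absurd hJ (joinSep_ne_nil hlenA)
        | cons x w =>
          have hx : α ≤ x := hAm x (by rw [hJ]; simp)
          exact lt_nil_cons hx
      | node γB PB hlenB hmodsB hwnfB hordB =>
        have hαA : α ≤ γA := hAm γA (sep_mem hlenA)
        have hαB : α ≤ γB := hBm γB (sep_mem hlenB)
        rcases lt_trichotomy γA γB with hγ | hγ | hγ
        · -- γA < γB : B is a single block at level γA
          have hpA : List.Pairwise (Le (Order.succ γA)) PA := by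
            haveI : IsTrans (List L) (Le (Order.succ γA)) := ⟨fun a b c h1 h2 => Le_trans' h1 h2⟩
            exact List.isChain_iff_pairwise.mp hordA
          have hmodB1 : ∀ p ∈ [joinSep γB PB], ∀ x ∈ p, γA < x := by
            intro p hp x hx
            have hp' : p = joinSep γB PB := by simpa using hp
            subst hp'
            rcases mem_joinSep hx with rfl | ⟨q, hq, hxq⟩
            · exact hγ
            · exact lt_trans hγ (hmodsB q hq x hxq)
          have horc : ∀ r ∈ PA.reverse, ∀ t ∈ [joinSep γB PB],
              Lt (Order.succ γA) r t ∨ Lt (Order.succ γA) t r ∨ r = t := by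
            intro r hr t ht
            have hr' : r ∈ PA := List.mem_reverse.mp hr
            have ht' : t = joinSep γB PB := by simpa using ht
            subst ht'
            apply ih (Order.succ γA) r (joinSep γB PB) ?_ ?_ ?_ (hwnfA r hr')
              (WNF.node γB PB hlenB hmodsB hwnfB hordB)
            · have h1 := block_len_lt (β := γA) hr' hlenA
              omega
            · intro x hx; exact Order.succ_le_of_lt (hmodsA r hr' x hx)
            · intro x hx; exact Order.succ_le_of_lt (hmodB1 (joinSep γB PB) (by simp) x hx)
          have hres := strip γA PA.reverse [joinSep γB PB] [] PA [joinSep γB PB]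
            (by simp) (by simp) hmodsA hmodB1 hpA (by simp) horc
          have hsingle : joinSep γA [joinSep γB PB] = joinSep γB PB := rfl
          rw [hsingle] at hres
          rcases hres with h | h | h
          · exact Or.inl (Lt_mono_level hαA h)
          · exact Or.inr (Or.inl (Lt_mono_level hαA h))
          · exact Or.inr (Or.inr h)
        · -- γA = γB
          subst hγ
          have hpA : List.Pairwise (Le (Order.succ γA)) PA := by
            haveI : IsTrans (List L) (Le (Order.succ γA)) := ⟨fun a b c h1 h2 => Le_trans' h1 h2⟩
            exact List.isChain_iff_pairwise.mp hordA
          have hpB : List.Pairwise (Le (Order.succ γA)) PB := by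
            haveI : IsTrans (List L) (Le (Order.succ γA)) := ⟨fun a b c h1 h2 => Le_trans' h1 h2⟩
            exact List.isChain_iff_pairwise.mp hordB
          have horc : ∀ r ∈ PA.reverse, ∀ t ∈ PB.reverse,
              Lt (Order.succ γA) r t ∨ Lt (Order.succ γA) t r ∨ r = t := by
            intro r hr t ht
            have hr' : r ∈ PA := List.mem_reverse.mp hr
            have ht' : t ∈ PB := List.mem_reverse.mp ht
            apply ih (Order.succ γA) r t ?_ ?_ ?_ (hwnfA r hr') (hwnfB t ht')
            · have h1 := block_len_lt (β := γA) hr' hlenA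
              have h2 := block_len_lt (β := γA) ht' hlenB
              omega
            · intro x hx; exact Order.succ_le_of_lt (hmodsA r hr' x hx)
            · intro x hx; exact Order.succ_le_of_lt (hmodsB t ht' x hx)
          have hres := strip γA PA.reverse PB.reverse [] PA PB
            (by simp) (by simp) hmodsA hmodsB hpA hpB horc
          rcases hres with h | h | h
          · exact Or.inl (Lt_mono_level hαA h)
          · exact Or.inr (Or.inl (Lt_mono_level hαA h))
          · exact Or.inr (Or.inr h)
        · -- γB < γA : A is a single block at level γB
          have hpB : List.Pairwise (Le (Order.succ γB)) PB := by
            haveI : IsTrans (List L) (Le (Order.succ γB)) := ⟨fun a b c h1 h2 => Le_trans' h1 h2⟩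
            exact List.isChain_iff_pairwise.mp hordB
          have hmodA1 : ∀ p ∈ [joinSep γA PA], ∀ x ∈ p, γB < x := by
            intro p hp x hx
            have hp' : p = joinSep γA PA := by simpa using hp
            subst hp'
            rcases mem_joinSep hx with rfl | ⟨q, hq, hxq⟩
            · exact hγ
            · exact lt_trans hγ (hmodsA q hq x hxq)
          have horc : ∀ r ∈ [joinSep γA PA], ∀ t ∈ PB.reverse,
              Lt (Order.succ γB) r t ∨ Lt (Order.succ γB) t r ∨ r = t := by
            intro r hr t ht
            have hr' : r = joinSep γA PA := by simpa using hr
            have ht' : t ∈ PB := List.mem_reverse.mp ht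
            subst hr'
            apply ih (Order.succ γB) (joinSep γA PA) t ?_ ?_ ?_
              (WNF.node γA PA hlenA hmodsA hwnfA hordA) (hwnfB t ht')
            · have h2 := block_len_lt (β := γB) ht' hlenB
              omega
            · intro x hx; exact Order.succ_le_of_lt (hmodA1 (joinSep γA PA) (by simp) x hx)
            · intro x hx; exact Order.succ_le_of_lt (hmodsB t ht' x hx)
          have hres := strip γB [joinSep γA PA] PB.reverse [] [joinSep γA PA] PB
            (by simp) (by simp) hmodA1 hmodsB (by simp) hpB horc
          have hsingle : joinSep γB [joinSep γA PA] = joinSep γA PA := rfl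
          rw [hsingle] at hres
          rcases hres with h | h | h
          · exact Or.inl (Lt_mono_level hαB h)
          · exact Or.inr (Or.inl (Lt_mono_level hαB h))
          · exact Or.inr (Or.inr h)

end WormProof

/-- For `A, B ∈ 𝕎°_α`, either `GLP ⊢ ⟨α⟩A → ⟨α⟩B` or `GLP ⊢ ⟨α⟩B → ⟨α⟩A`. -/
theorem dia_comparable {L : Type} [LinearOrder L] [SuccOrder L] (α : L)
    (A B : List L)
    (hAm : ∀ β ∈ A, α ≤ β) (hBm : ∀ β ∈ B, α ≤ β)
    (hA : WNF A) (hB : WNF B) :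
    GLP ((Formula.dia α (worm A)).imp (Formula.dia α (worm B))) ∨
      GLP ((Formula.dia α (worm B)).imp (Formula.dia α (worm A))) := by
  rcases WormProof.tri (A.length + B.length) α A B le_rfl hAm hBm hA hB with h | h | h
  · exact Or.inr (WormProof.imp_trans (WormProof.dia_mono h) (WormProof.dia_inner le_rfl _))
  · exact Or.inl (WormProof.imp_trans (WormProof.dia_mono h) (WormProof.dia_inner le_rfl _))
  · subst h
    exact Or.inl WormProof.imp_refl'
end
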